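/- Let P = ∏_{n ≥ 1} ℚ[c] (one polynomial-ring factor for each positive integer n), and let E ⊆ P be the multiplicative subset generated by the elements ε_m (m ≥ 1), where the n-th component of ε_m is c if n divides m and 1 otherwise. Consider the two-term cochain complex d : ℚ × P → E^{-1}P, d(q, f) = [f] − q·[1], where [·] denotes the localization map P → E^{-1}P and 1 ∈ P is the tuple all of whose components are the constant polynomial 1. Then ker(d) ≅ ℚ (consisting of the pairs (q, q·1)) and coker(d) ≅ ⊕_{n ≥ 1} ℚ[c, c^{-1}]/ℚ[c]. (This computes the adelic cohomology of rational SO(2)-equivariant stable homotopy theory: H^0 = ℚ and H^1 = ⊕_C H_*(B SO(2)/C), the sum over finite cyclic subgroups C.) -/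

import Mathlib

open scoped DirectSum

/-- `P = ∏_{n ≥ 1} ℚ[c]`, one polynomial ring factor for each positive integer. -/
abbrev SOtwoP : Type := ∀ _ : ℕ+, Polynomial ℚ

/-- The Euler class `ε_m`, whose `n`-th component is `c` if `n ∣ m` and `1` otherwise. -/
noncomputable def euler (m : ℕ+) : SOtwoP :=
  fun n => if (n : ℕ) ∣ (m : ℕ) then Polynomial.X else 1

/-- The multiplicative set generated by the Euler classes `ε_m`. -/
noncomputable def eulerSet : Submonoid SOtwoP := Submonoid.closure (Set.range euler)

/-- The differential `d : ℚ × P →+ E⁻¹P`, `d(q, f) = [f] - q·[1]`. -/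
noncomputable def soTwoD : ℚ × SOtwoP →+ LocalizedModule eulerSet SOtwoP :=
  (LocalizedModule.mkLinearMap eulerSet SOtwoP).toAddMonoidHom.comp
    ((AddMonoidHom.snd ℚ SOtwoP) -
      (algebraMap ℚ SOtwoP).toAddMonoidHom.comp (AddMonoidHom.fst ℚ SOtwoP))

/-- The inclusion of `ℚ` as the pairs `(q, q·1)`. -/
noncomputable def soTwoKer : ℚ →+ ℚ × SOtwoP :=
  (AddMonoidHom.id ℚ).prod (algebraMap ℚ SOtwoP).toAddMonoidHom

/-- The cokernel `ℚ[c, c⁻¹]/ℚ[c]` of the localization map `ℚ[c] → ℚ[c][1/c]`. -/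
abbrev soTwoCoker : Type :=
  LocalizedModule (Submonoid.powers (Polynomial.X : Polynomial ℚ)) (Polynomial ℚ) ⧸
    LinearMap.range
      (LocalizedModule.mkLinearMap (Submonoid.powers (Polynomial.X : Polynomial ℚ))
        (Polynomial ℚ))

set_option maxHeartbeats 1000000
set_option synthInstance.maxHeartbeats 100000

namespace SOtwoAux

open Polynomial LocalizedModule

noncomputable section

/-- The submonoid of powers of `X`. -/
abbrev pX : Submonoid (Polynomial ℚ) := Submonoid.powers (Polynomial.X : Polynomial ℚ)

/-- The cokernel of `d`, as an abelian group. -/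
abbrev QQ : Type := LocalizedModule eulerSet SOtwoP ⧸ soTwoD.range

lemma X_pow_ne_zero (k : ℕ) : (X : Polynomial ℚ) ^ k ≠ 0 := pow_ne_zero _ X_ne_zero

lemma euler_comp_mem (m n : ℕ+) : euler m n ∈ pX := by
  rw [Submonoid.mem_powers_iff]
  unfold euler
  split
  · exact ⟨1, pow_one _⟩
  · exact ⟨0, pow_zero _⟩

lemma eulerSet_comp_mem {e : SOtwoP} (he : e ∈ eulerSet) (n : ℕ+) : e n ∈ pX := by
  have he' : e ∈ Submonoid.closure (Set.range euler) := he
  refine Submonoid.closure_induction (motive := fun x _ => x n ∈ pX) ?_ ?_ ?_ he'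
  · rintro x ⟨m, rfl⟩; exact euler_comp_mem m n
  · simpa using one_mem pX
  · intro x y _ _ ihx ihy; exact mul_mem ihx ihy

lemma eulerSet_struct {e : SOtwoP} (he : e ∈ eulerSet) :
    ∃ k : ℕ+ → ℕ, {n | k n ≠ 0}.Finite ∧ ∀ n, e n = X ^ k n := by
  have he' : e ∈ Submonoid.closure (Set.range euler) := he
  refine Submonoid.closure_induction
    (motive := fun x _ => ∃ k : ℕ+ → ℕ, {n | k n ≠ 0}.Finite ∧ ∀ n, x n = X ^ k n) ?_ ?_ ?_ he'
  · rintro x ⟨m, rfl⟩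
    refine ⟨fun n => if (n : ℕ) ∣ (m : ℕ) then 1 else 0, ?_, ?_⟩
    · refine Set.Finite.subset
        (Set.Finite.preimage (Set.injOn_of_injective PNat.coe_injective)
          (Set.finite_Iic (m : ℕ))) ?_
      intro n hn
      simp only [Set.mem_setOf_eq, ne_eq, ite_eq_right_iff, Classical.not_imp] at hn
      exact Nat.le_of_dvd m.pos hn.1
    · intro n
      by_cases h : (n : ℕ) ∣ (m : ℕ) <;> simp [euler, h]
  · exact ⟨fun _ => 0, by simp, fun n => by simp⟩
  · rintro x y _ _ ⟨k1, hf1, hk1⟩ ⟨k2, hf2, hk2⟩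
    refine ⟨fun n => k1 n + k2 n, (hf1.union hf2).subset ?_, fun n => ?_⟩
    · intro n hn
      simp only [Set.mem_setOf_eq, ne_eq] at hn ⊢
      by_contra h
      push_neg at h
      simp only [Set.mem_union, Set.mem_setOf_eq, not_or, not_not] at h
      omega
    · show x n * y n = _
      rw [hk1 n, hk2 n, pow_add]

lemma pX_cancel {s : Polynomial ℚ} (hs : s ∈ pX) {a b : Polynomial ℚ}
    (h : s * a = s * b) : a = b := by
  obtain ⟨k, rfl⟩ := (Submonoid.mem_powers_iff _ _).mp hs
  exact mul_left_cancel₀ (X_pow_ne_zero k) h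

lemma eulerSet_cancel {u : SOtwoP} (hu : u ∈ eulerSet) {a b : SOtwoP}
    (h : u * a = u * b) : a = b := by
  funext n
  exact pX_cancel (eulerSet_comp_mem hu n) (congrFun h n)

/-- The exponent of an element of `pX`. -/
def expOf (s : pX) : ℕ := ((Submonoid.mem_powers_iff _ _).mp s.2).choose

lemma X_pow_expOf (s : pX) : (X : Polynomial ℚ) ^ expOf s = (s : Polynomial ℚ) :=
  ((Submonoid.mem_powers_iff _ _).mp s.2).choose_spec

lemma euler_pow_mem (n : ℕ+) (k : ℕ) : euler n ^ k ∈ eulerSet :=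
  pow_mem (Submonoid.subset_closure (Set.mem_range_self n)) k

/-- `ε_n^k` as an element of the multiplicative set. -/
def epow (n : ℕ+) (k : ℕ) : eulerSet := ⟨euler n ^ k, euler_pow_mem n k⟩

lemma epow_coe (n : ℕ+) (k : ℕ) : (epow n k : SOtwoP) = euler n ^ k := rfl

lemma euler_pow_self (n : ℕ+) (k : ℕ) : (euler n ^ k) n = X ^ k := by
  have : euler n n = X := by unfold euler; simp
  show (euler n n) ^ k = _
  rw [this]

lemma soTwoD_apply (q : ℚ) (f : SOtwoP) :
    soTwoD (q, f) = LocalizedModule.mk (f - algebraMap ℚ SOtwoP q) (1 : eulerSet) := rfl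

lemma mk_one_mem (h : SOtwoP) :
    LocalizedModule.mk h (1 : eulerSet) ∈ soTwoD.range :=
  ⟨(0, h), by rw [soTwoD_apply, map_zero, sub_zero]⟩

lemma mk_add' {R₀ : Type*} [CommRing R₀] {S : Submonoid R₀} {M : Type*} [AddCommGroup M]
    [Module R₀ M] (a b : M) (s : S) :
    LocalizedModule.mk (a + b) s = LocalizedModule.mk a s + LocalizedModule.mk b s := by
  rw [mk_add_mk, mk_eq]
  exact ⟨1, by rw [one_smul, one_smul, mul_smul, smul_add]⟩

/-- `mk · s` as an additive monoid hom. -/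
def mkHomN (s : eulerSet) : SOtwoP →+ LocalizedModule eulerSet SOtwoP where
  toFun a := LocalizedModule.mk a s
  map_zero' := zero_mk s
  map_add' a b := mk_add' a b s

/-- `mk · s` composed with the quotient map. -/
def QmkHom (s : eulerSet) : SOtwoP →+ QQ :=
  (QuotientAddGroup.mk' soTwoD.range).comp (mkHomN s)

lemma QmkHom_apply (s : eulerSet) (a : SOtwoP) :
    QmkHom s a = QuotientAddGroup.mk (LocalizedModule.mk a s) := rfl

/-- The raw component map `ℚ[c] × pX → QQ`. -/
def phiAux (n : ℕ+) (p : Polynomial ℚ × pX) : QQ :=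
  QuotientAddGroup.mk (LocalizedModule.mk (Pi.single n p.1) (epow n (expOf p.2)))

lemma phiAux_wd (n : ℕ+) : ∀ (p p' : Polynomial ℚ × pX), p ≈ p' → phiAux n p = phiAux n p' := by
  rintro ⟨g, s⟩ ⟨g', s'⟩ ⟨u, hu⟩
  simp only [Submonoid.smul_def, smul_eq_mul] at hu
  have h1 : (s' : Polynomial ℚ) * g = (s : Polynomial ℚ) * g' := pX_cancel u.2 hu
  unfold phiAux
  apply congrArg
  rw [mk_eq]
  refine ⟨1, ?_⟩
  rw [one_smul, one_smul, Submonoid.smul_def, Submonoid.smul_def, smul_eq_mul, smul_eq_mul]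
  funext m
  rw [Pi.mul_apply, Pi.mul_apply]
  by_cases hm : m = n
  · subst hm
    rw [Pi.single_eq_same, Pi.single_eq_same]
    show (euler m ^ expOf s') m * g = (euler m ^ expOf s) m * g'
    rw [euler_pow_self, euler_pow_self, X_pow_expOf, X_pow_expOf, h1]
  · rw [Pi.single_eq_of_ne hm, Pi.single_eq_of_ne hm, mul_zero, mul_zero]

/-- The component map `ℚ[c][1/c] →+ QQ`. -/
def phi (n : ℕ+) : LocalizedModule pX (Polynomial ℚ) →+ QQ where
  toFun x := x.liftOn (phiAux n) (phiAux_wd n)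
  map_zero' := by
    rw [← zero_mk (1 : pX)]
    rw [liftOn_mk]
    unfold phiAux
    rw [Pi.single_zero, zero_mk]
    rfl
  map_add' x y := by
    induction x, y using LocalizedModule.induction_on₂ with
    | _ g h s t =>
      show (LocalizedModule.mk g s + LocalizedModule.mk h t).liftOn (phiAux n) (phiAux_wd n)
          = (LocalizedModule.mk g s).liftOn (phiAux n) (phiAux_wd n)
            + (LocalizedModule.mk h t).liftOn (phiAux n) (phiAux_wd n)
      rw [mk_add_mk, liftOn_mk, liftOn_mk, liftOn_mk]
      unfold phiAux
      rw [← QuotientAddGroup.mk_add]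
      apply congrArg
      rw [mk_add_mk, mk_eq]
      refine ⟨1, ?_⟩
      rw [one_smul, one_smul]
      simp only [Submonoid.smul_def, smul_eq_mul]
      funext m
      simp only [Submonoid.coe_mul, epow_coe, Pi.mul_apply, Pi.add_apply]
      by_cases hm : m = n
      · subst hm
        simp only [Pi.single_eq_same, euler_pow_self, X_pow_expOf, Submonoid.coe_mul]
        try ring
      · simp [Pi.single_eq_of_ne hm]

lemma phi_mk (n : ℕ+) (g : Polynomial ℚ) (s : pX) :
    phi n (LocalizedModule.mk g s)
      = QuotientAddGroup.mk (LocalizedModule.mk (Pi.single n g) (epow n (expOf s))) :=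
  liftOn_mk (f := phiAux n) (phiAux_wd n) g s

lemma expOf_one : expOf (1 : pX) = 0 := by
  have h := X_pow_expOf (1 : pX)
  have h2 := congrArg natDegree h
  simpa [natDegree_X_pow] using h2

lemma phi_mkLinearMap (n : ℕ+) (g : Polynomial ℚ) :
    phi n (mkLinearMap pX (Polynomial ℚ) g) = 0 := by
  have : mkLinearMap pX (Polynomial ℚ) g = LocalizedModule.mk g 1 := rfl
  rw [this, phi_mk, expOf_one]
  have hep : epow n 0 = 1 := Subtype.ext (pow_zero _)
  rw [hep]
  exact (QuotientAddGroup.eq_zero_iff _).mpr (mk_one_mem _)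

/-- The component map `soTwoCoker →+ QQ`. -/
def psi (n : ℕ+) : soTwoCoker →+ QQ where
  toFun z := Quotient.liftOn z (fun x => phi n x) (fun a b hab => by
    have hab' : a - b ∈ LinearMap.range (mkLinearMap pX (Polynomial ℚ)) :=
      (Submodule.quotientRel_def _).mp hab
    obtain ⟨g, hg⟩ := hab'
    have h2 : phi n (a - b) = 0 := by rw [← hg]; exact phi_mkLinearMap n g
    rw [map_sub] at h2
    exact sub_eq_zero.mp h2)
  map_zero' := by
    show phi n (0 : LocalizedModule pX (Polynomial ℚ)) = 0
    exact map_zero (phi n)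
  map_add' a b := by
    obtain ⟨x, rfl⟩ := Submodule.Quotient.mk_surjective _ a
    obtain ⟨y, rfl⟩ := Submodule.Quotient.mk_surjective _ b
    rw [← Submodule.Quotient.mk_add]
    exact map_add (phi n) x y

lemma psi_mk (n : ℕ+) (x : LocalizedModule pX (Polynomial ℚ)) :
    psi n (Submodule.Quotient.mk x) = phi n x := rfl

/-- The raw retraction `P × E → soTwoCoker`. -/
def thetaAux (n : ℕ+) (p : SOtwoP × eulerSet) : soTwoCoker :=
  Submodule.Quotient.mk
    (LocalizedModule.mk (p.1 n) ⟨p.2.1 n, eulerSet_comp_mem p.2.2 n⟩)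

lemma thetaAux_wd (n : ℕ+) :
    ∀ (p p' : SOtwoP × eulerSet), p ≈ p' → thetaAux n p = thetaAux n p' := by
  rintro ⟨a, s⟩ ⟨a', s'⟩ ⟨u, hu⟩
  simp only [Submonoid.smul_def, smul_eq_mul] at hu
  unfold thetaAux
  apply congrArg
  rw [mk_eq]
  refine ⟨⟨u.1 n, eulerSet_comp_mem u.2 n⟩, ?_⟩
  simp only [Submonoid.smul_def, smul_eq_mul]
  have := congrFun hu n
  simpa using this

/-- The retraction on the localized module. -/
def thetaN (n : ℕ+) : LocalizedModule eulerSet SOtwoP →+ soTwoCoker where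
  toFun x := x.liftOn (thetaAux n) (thetaAux_wd n)
  map_zero' := by
    rw [← zero_mk (1 : eulerSet)]
    rw [liftOn_mk]
    unfold thetaAux
    show Submodule.Quotient.mk (LocalizedModule.mk ((0 : SOtwoP) n) _) = 0
    rw [show ((0 : SOtwoP) n) = 0 from rfl, zero_mk]
    rfl
  map_add' x y := by
    induction x, y using LocalizedModule.induction_on₂ with
    | _ a b s t =>
      show (LocalizedModule.mk a s + LocalizedModule.mk b t).liftOn (thetaAux n) (thetaAux_wd n)
          = (LocalizedModule.mk a s).liftOn (thetaAux n) (thetaAux_wd n)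
            + (LocalizedModule.mk b t).liftOn (thetaAux n) (thetaAux_wd n)
      rw [mk_add_mk, liftOn_mk, liftOn_mk, liftOn_mk]
      unfold thetaAux
      rw [← Submodule.Quotient.mk_add]
      apply congrArg
      rw [mk_add_mk, mk_eq]
      refine ⟨1, ?_⟩
      rw [one_smul, one_smul]
      simp only [Submonoid.smul_def, smul_eq_mul, Submonoid.coe_mul, Pi.mul_apply,
        Pi.add_apply]
      try ring

lemma thetaN_mk (n : ℕ+) (a : SOtwoP) (s : eulerSet) :
    thetaN n (LocalizedModule.mk a s)
      = Submodule.Quotient.mk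
          (LocalizedModule.mk (a n) ⟨s.1 n, eulerSet_comp_mem s.2 n⟩) :=
  liftOn_mk (f := thetaAux n) (thetaAux_wd n) a s

/-- The retraction `QQ →+ soTwoCoker`. -/
def theta (n : ℕ+) : QQ →+ soTwoCoker :=
  QuotientAddGroup.lift soTwoD.range (thetaN n) (by
    rintro x ⟨⟨q, f⟩, rfl⟩
    rw [AddMonoidHom.mem_ker, soTwoD_apply, thetaN_mk]
    have h1 : (⟨(1 : eulerSet).1 n, eulerSet_comp_mem (1 : eulerSet).2 n⟩ : pX) = 1 :=
      Subtype.ext (by show (1 : SOtwoP) n = 1; rfl)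
    rw [h1]
    refine (Submodule.Quotient.mk_eq_zero _).mpr ⟨(f - algebraMap ℚ SOtwoP q) n, rfl⟩)

lemma theta_mk (n : ℕ+) (x : LocalizedModule eulerSet SOtwoP) :
    theta n (QuotientAddGroup.mk x) = thetaN n x := rfl

lemma theta_psi_same (n : ℕ+) (z : soTwoCoker) : theta n (psi n z) = z := by
  obtain ⟨x, rfl⟩ := Submodule.Quotient.mk_surjective _ z
  induction x using LocalizedModule.induction_on with
  | _ g s =>
    rw [psi_mk, phi_mk, theta_mk, thetaN_mk]
    apply congrArg
    have hden : (⟨(epow n (expOf s)).1 n, eulerSet_comp_mem (epow n (expOf s)).2 n⟩ : pX) = s :=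
      Subtype.ext (by
        show (euler n ^ expOf s) n = (s : Polynomial ℚ)
        rw [euler_pow_self, X_pow_expOf])
    rw [hden]
    apply congrArg (fun a => LocalizedModule.mk a s)
    simp

lemma theta_psi_ne {n m : ℕ+} (h : m ≠ n) (z : soTwoCoker) : theta n (psi m z) = 0 := by
  obtain ⟨x, rfl⟩ := Submodule.Quotient.mk_surjective _ z
  induction x using LocalizedModule.induction_on with
  | _ g s =>
    rw [psi_mk, phi_mk, theta_mk, thetaN_mk]
    have hnum : (Pi.single m g : SOtwoP) n = 0 := by simp [Pi.single_eq_of_ne (Ne.symm h)]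
    rw [hnum, zero_mk]
    rfl

local instance : AddCommGroup (LocalizedModule pX (Polynomial ℚ)) := inferInstance

/-- The candidate isomorphism `⨁ → QQ`. -/
def Psi : (⨁ _ : ℕ+, soTwoCoker) →+ QQ := DirectSum.toAddMonoid (ι := ℕ+) (β := fun _ => soTwoCoker) (γ := QQ) psi

lemma theta_Psi (n : ℕ+) (x : ⨁ _ : ℕ+, soTwoCoker) : theta n (Psi x) = x n := by
  induction x using DirectSum.induction_on with
  | zero => simp
  | of m z =>
    rw [Psi, DirectSum.toAddMonoid_of]
    by_cases h : m = n
    · subst h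
      rw [theta_psi_same, DirectSum.of_eq_same]
    · rw [theta_psi_ne h, DirectSum.of_eq_of_ne _ _ _ (Ne.symm h)]
  | add a b ha hb =>
    rw [map_add, map_add, ha, hb, DirectSum.add_apply]

lemma Psi_injective : Function.Injective Psi := by
  rw [injective_iff_map_eq_zero]
  intro x hx
  apply DFinsupp.ext
  intro n
  have := theta_Psi n x
  rw [hx, map_zero] at this
  exact this.symm

lemma Psi_surjective : Function.Surjective Psi := by
  intro y
  obtain ⟨x, rfl⟩ := QuotientAddGroup.mk_surjective y
  induction x using LocalizedModule.induction_on with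
  | _ f e =>
    classical
    obtain ⟨k, hfin, hk⟩ := eulerSet_struct e.2
    set S : Finset ℕ+ := hfin.toFinset with hS
    refine ⟨∑ n ∈ S, DirectSum.of (fun _ : ℕ+ => soTwoCoker) n
        (Submodule.Quotient.mk (LocalizedModule.mk (f n)
          ⟨X ^ k n, (Submonoid.mem_powers_iff _ _).mpr ⟨k n, rfl⟩⟩)), ?_⟩
    rw [map_sum]
    have hterm : ∀ n ∈ S,
        Psi (DirectSum.of (fun _ : ℕ+ => soTwoCoker) n
          (Submodule.Quotient.mk (LocalizedModule.mk (f n)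
            ⟨X ^ k n, (Submonoid.mem_powers_iff _ _).mpr ⟨k n, rfl⟩⟩)))
        = QmkHom e (Pi.single n (f n)) := by
      intro n _
      rw [Psi, DirectSum.toAddMonoid_of, psi_mk, phi_mk, QmkHom_apply]
      apply congrArg
      rw [mk_eq]
      refine ⟨1, ?_⟩
      rw [one_smul, one_smul]
      simp only [Submonoid.smul_def, smul_eq_mul]
      funext m
      by_cases hm : m = n
      · subst hm
        rw [Pi.mul_apply, Pi.mul_apply, Pi.single_eq_same, epow_coe, euler_pow_self,
          X_pow_expOf, hk m]
      · rw [Pi.mul_apply, Pi.mul_apply, Pi.single_eq_of_ne hm, mul_zero, mul_zero]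
    rw [Finset.sum_congr rfl hterm, ← map_sum]
    set g : SOtwoP := f - ∑ n ∈ S, Pi.single n (f n) with hg
    have hg0 : QmkHom e g = 0 := by
      have h1 : LocalizedModule.mk g e = LocalizedModule.mk g 1 := by
        rw [mk_eq]
        refine ⟨1, ?_⟩
        rw [one_smul, one_smul, one_smul]
        rw [Submonoid.smul_def, smul_eq_mul]
        funext m
        rw [Pi.mul_apply]
        by_cases hm : m ∈ S
        · have hgm : g m = 0 := by
            rw [hg]
            simp only [Pi.sub_apply, Finset.sum_apply]
            rw [Finset.sum_pi_single, if_pos hm, sub_self]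
          rw [hgm, mul_zero]
        · have hkm : k m = 0 := by
            by_contra hc
            exact hm (hfin.mem_toFinset.mpr hc)
          have : e.1 m = 1 := by rw [hk m, hkm, pow_zero]
          rw [this, one_mul]
      rw [QmkHom_apply, h1]
      exact (QuotientAddGroup.eq_zero_iff _).mpr (mk_one_mem g)
    have hfs : f = (∑ n ∈ S, Pi.single n (f n)) + g := by rw [hg]; ring
    calc QmkHom e (∑ n ∈ S, Pi.single n (f n))
        = QmkHom e f - QmkHom e g := by
          rw [← map_sub (QmkHom e) f g]
          congr 1
          rw [hg]
          ring
      _ = QmkHom e f := by rw [hg0, sub_zero]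
      _ = QuotientAddGroup.mk (LocalizedModule.mk f e) := rfl

end

end SOtwoAux

/-- the adelic cohomology of rational `SO(2)`-equivariant stable
homotopy theory: for `d(q,f) = [f] - q·[1]` on `ℚ × ∏_{n≥1} ℚ[c]` one has
`ker d ≅ ℚ` (the pairs `(q, q·1)`) and `coker d ≅ ⊕_{n≥1} ℚ[c,c⁻¹]/ℚ[c]`. -/
theorem soTwo_adelic_cohomology :
    soTwoD.ker = soTwoKer.range ∧
    Nonempty ((LocalizedModule eulerSet SOtwoP ⧸ soTwoD.range) ≃+
      (⨁ _ : ℕ+, soTwoCoker)) := by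
  constructor
  · ext p
    obtain ⟨q, f⟩ := p
    simp only [AddMonoidHom.mem_ker, AddMonoidHom.mem_range]
    constructor
    · intro h
      rw [SOtwoAux.soTwoD_apply] at h
      rw [show (0 : LocalizedModule eulerSet SOtwoP) = LocalizedModule.mk 0 1 from (LocalizedModule.zero_mk 1).symm] at h
      obtain ⟨u, hu⟩ := LocalizedModule.mk_eq.mp h
      simp only [one_smul, Submonoid.smul_def, smul_eq_mul, mul_zero] at hu
      have h3 : (u : SOtwoP) * (f - algebraMap ℚ SOtwoP q) = (u : SOtwoP) * 0 := by
        rw [mul_zero]; exact hu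
      have h2 : f - algebraMap ℚ SOtwoP q = 0 := SOtwoAux.eulerSet_cancel u.2 h3
      refine ⟨q, ?_⟩
      have h4 : soTwoKer q = (q, algebraMap ℚ SOtwoP q) := rfl
      rw [h4, (sub_eq_zero.mp h2).symm]
    · rintro ⟨r, hr⟩
      rw [← hr, show soTwoKer r = (r, algebraMap ℚ SOtwoP r) from rfl,
        SOtwoAux.soTwoD_apply, sub_self, LocalizedModule.zero_mk]
  · exact ⟨(AddEquiv.ofBijective SOtwoAux.Psi
      ⟨SOtwoAux.Psi_injective, SOtwoAux.Psi_surjective⟩).symm⟩
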